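/- Let H be a Hopf algebra and χ ∈ H⊗H a Hochschild 2-cocycle of the coalgebra H (i.e. χ₁₂ + (Δ⊗Id)(χ) = χ₂₃ + (Id⊗Δ)(χ)) with (Id⊗ε)(χ) = 0. Define γ := m(S⊗Id)(χ) = S(χⁱ)χᵢ ∈ H. Then b¹(γ) := 1⊗γ − Δ(γ) + γ⊗1 = χ + τ(S⊗S)(χ). In particular if τ(S⊗S)(χ) = χ and char(k) ≠ 2, then χ = b¹(γ/2) is a Hochschild 2-coboundary. -/

import Mathlib

open scoped TensorProduct

noncomputable section

open TensorProduct LinearMap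

set_option synthInstance.maxHeartbeats 1000000
set_option maxHeartbeats 1000000

variable (k H : Type*) [Field k] [Ring H] [HopfAlgebra k H]

/-- leg embedding `a ⊗ b ↦ a ⊗ b ⊗ 1` into `H ⊗ (H ⊗ H)`. -/
def leg12 : H ⊗[k] H →ₐ[k] H ⊗[k] (H ⊗[k] H) :=
  Algebra.TensorProduct.map (AlgHom.id k H) Algebra.TensorProduct.includeLeft

/-- leg embedding `a ⊗ b ↦ 1 ⊗ a ⊗ b`. -/
def leg23 : H ⊗[k] H →ₐ[k] H ⊗[k] (H ⊗[k] H) :=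
  Algebra.TensorProduct.includeRight

/-- leg embedding `a ⊗ b ↦ a ⊗ 1 ⊗ b`. -/
def leg13 : H ⊗[k] H →ₐ[k] H ⊗[k] (H ⊗[k] H) :=
  Algebra.TensorProduct.map (AlgHom.id k H) Algebra.TensorProduct.includeRight

/-- `(Id ⊗ Δ)` as an algebra map `H ⊗ H → H ⊗ (H ⊗ H)`. -/
def idComul : H ⊗[k] H →ₐ[k] H ⊗[k] (H ⊗[k] H) :=
  Algebra.TensorProduct.map (AlgHom.id k H) (Bialgebra.comulAlgHom k H)

/-- `(Δ ⊗ Id)` as an algebra map `H ⊗ H → H ⊗ (H ⊗ H)` (after reassociation). -/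
def comulId : H ⊗[k] H →ₐ[k] H ⊗[k] (H ⊗[k] H) :=
  (Algebra.TensorProduct.assoc k k k H H H).toAlgHom.comp
    (Algebra.TensorProduct.map (Bialgebra.comulAlgHom k H) (AlgHom.id k H))

/-- the flip `a ⊗ b ↦ b ⊗ a` as an algebra map. -/
def swapT : H ⊗[k] H →ₐ[k] H ⊗[k] H := (Algebra.TensorProduct.comm k H H).toAlgHom

/-- A quasitriangular structure on the bialgebra `H`. -/
structure QT where
  R : H ⊗[k] H
  Rinv : H ⊗[k] H
  mul_inv : R * Rinv = 1
  inv_mul : Rinv * R = 1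
  quasi_cocomm : ∀ h : H, swapT k H (Coalgebra.comul (R := k) h) * R = R * Coalgebra.comul (R := k) h
  hex1 : idComul k H R = leg13 k H R * leg12 k H R
  hex2 : comulId k H R = leg13 k H R * leg23 k H R

/-- A pre-Cartier quasitriangular bialgebra structure on `H`. -/
structure PreCartier extends QT k H where
  χ : H ⊗[k] H
  chi_comm : ∀ h : H, χ * Coalgebra.comul (R := k) h = Coalgebra.comul (R := k) h * χ
  chi_hex1 : idComul k H χ = leg12 k H χ + leg12 k H Rinv * leg13 k H χ * leg12 k H R
  chi_hex2 : comulId k H χ = leg23 k H χ + leg23 k H Rinv * leg13 k H χ * leg23 k H R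

section Helpers

open TensorProduct LinearMap

/-- `m ∘ (S ⊗ id) : H ⊗ H → H`. -/
def gmap : H ⊗[k] H →ₗ[k] H :=
  LinearMap.mul' k H ∘ₗ map (HopfAlgebra.antipode (R := k)) LinearMap.id

/-- `(S ⊗ S) ∘ τ : H ⊗ H → H ⊗ H`. -/
def ssw : H ⊗[k] H →ₗ[k] H ⊗[k] H :=
  map (HopfAlgebra.antipode (R := k)) (HopfAlgebra.antipode (R := k)) ∘ₗ
    (TensorProduct.comm k H H).toLinearMap

/-- convolution product on `Hom(H, H ⊗ H)`. -/
def conv (f g : H →ₗ[k] H ⊗[k] H) : H →ₗ[k] H ⊗[k] H :=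
  LinearMap.mul' k (H ⊗[k] H) ∘ₗ map f g ∘ₗ Coalgebra.comul

/-- convolution unit on `Hom(H, H ⊗ H)`. -/
def cunit : H →ₗ[k] H ⊗[k] H :=
  Algebra.linearMap k (H ⊗[k] H) ∘ₗ Coalgebra.counit

variable {k H}

lemma gmap_tmul (a b : H) :
    gmap k H (a ⊗ₜ[k] b) = HopfAlgebra.antipode (R := k) a * b := by
  simp [gmap]

lemma ssw_tmul (a b : H) :
    ssw k H (a ⊗ₜ[k] b) =
      HopfAlgebra.antipode (R := k) b ⊗ₜ[k] HopfAlgebra.antipode (R := k) a := by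
  simp [ssw]

lemma g_comul :
    gmap k H ∘ₗ Coalgebra.comul = Algebra.linearMap k H ∘ₗ Coalgebra.counit := by
  have h := HopfAlgebra.mul_antipode_rTensor_comul (R := k) (A := H)
  rw [gmap, LinearMap.comp_assoc]
  exact h

lemma g_comul_apply (x : H) :
    gmap k H (Coalgebra.comul x) = Algebra.linearMap k H (Coalgebra.counit (R := k) x) :=
  LinearMap.congr_fun g_comul x

lemma mul_comul_apply (w : H ⊗[k] H) :
    LinearMap.mul' k (H ⊗[k] H)
        (map (Coalgebra.comul (R := k) (A := H)) (Coalgebra.comul (R := k) (A := H)) w) =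
      Coalgebra.comul (LinearMap.mul' k H w) :=
  LinearMap.congr_fun
    (TensorProduct.ext' (fun a b => by simp [LinearMap.mul'_apply]) :
      LinearMap.mul' k (H ⊗[k] H) ∘ₗ
          map (Coalgebra.comul (R := k) (A := H)) (Coalgebra.comul (R := k) (A := H)) =
        Coalgebra.comul ∘ₗ LinearMap.mul' k H) w

lemma comul_linearMap_apply (c : k) :
    (Coalgebra.comul (R := k) (A := H)) (Algebra.linearMap k H c) =
      Algebra.linearMap k (H ⊗[k] H) c := by
  simp [Algebra.linearMap_apply, Algebra.algebraMap_eq_smul_one, map_smul]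

lemma antipode_one : HopfAlgebra.antipode (R := k) (1 : H) = 1 := by
  have h := HopfAlgebra.mul_antipode_rTensor_comul_apply (R := k) (A := H) (a := 1)
  simpa [Algebra.TensorProduct.one_def, LinearMap.mul'_apply] using h

lemma conv_cunit_right (f : H →ₗ[k] H ⊗[k] H) : conv k H f (cunit k H) = f := by
  have hmap : map f (cunit k H)
      = map f (Algebra.linearMap k (H ⊗[k] H)) ∘ₗ
          (Coalgebra.counit (R := k) (A := H)).lTensor H :=
    TensorProduct.ext' fun a b => by simp [cunit]
  apply LinearMap.ext; intro x
  simp only [conv, comp_apply, hmap, Coalgebra.lTensor_counit_comul]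
  simp only [map_tmul, Algebra.linearMap_apply, map_one, LinearMap.mul'_apply, mul_one]

lemma conv_cunit_left (f : H →ₗ[k] H ⊗[k] H) : conv k H (cunit k H) f = f := by
  have hmap : map (cunit k H) f
      = map (Algebra.linearMap k (H ⊗[k] H)) f ∘ₗ
          (Coalgebra.counit (R := k) (A := H)).rTensor H :=
    TensorProduct.ext' fun a b => by simp [cunit]
  apply LinearMap.ext; intro x
  simp only [conv, comp_apply, hmap, Coalgebra.rTensor_counit_comul]
  simp only [map_tmul, Algebra.linearMap_apply, map_one, LinearMap.mul'_apply, one_mul]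

lemma mul'_assoc_symm_apply (A : Type*) [Ring A] [Algebra k A]
    (w : A ⊗[k] (A ⊗[k] A)) :
    LinearMap.mul' k A ((LinearMap.mul' k A).rTensor A ((TensorProduct.assoc k A A A).symm w)) =
      LinearMap.mul' k A ((LinearMap.mul' k A).lTensor A w) := by
  induction w using TensorProduct.induction_on with
  | zero => simp
  | add u v hu hv => simp only [map_add, hu, hv]
  | tmul x yz =>
    induction yz using TensorProduct.induction_on with
    | zero => simp [tmul_zero]
    | add u v hu hv => simp only [tmul_add, map_add, hu, hv]
    | tmul y z => simp [LinearMap.mul'_apply, mul_assoc]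

lemma conv_assoc (f g h : H →ₗ[k] H ⊗[k] H) :
    conv k H (conv k H f g) h = conv k H f (conv k H g h) := by
  have h1 : map (LinearMap.mul' k (H ⊗[k] H) ∘ₗ map f g ∘ₗ Coalgebra.comul) h
      = (LinearMap.mul' k (H ⊗[k] H)).rTensor (H ⊗[k] H) ∘ₗ map (map f g) h ∘ₗ
          (Coalgebra.comul (R := k) (A := H)).rTensor H :=
    TensorProduct.ext' fun a b => by simp
  have h2 : map f (LinearMap.mul' k (H ⊗[k] H) ∘ₗ map g h ∘ₗ Coalgebra.comul)
      = (LinearMap.mul' k (H ⊗[k] H)).lTensor (H ⊗[k] H) ∘ₗ map f (map g h) ∘ₗ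
          (Coalgebra.comul (R := k) (A := H)).lTensor H :=
    TensorProduct.ext' fun a b => by simp
  apply LinearMap.ext; intro x
  simp only [conv, comp_apply]
  rw [h1, h2]
  simp only [comp_apply]
  rw [← Coalgebra.coassoc_symm_apply, map_map_assoc_symm, mul'_assoc_symm_apply]

lemma conv_comul_antipodeComul :
    conv k H Coalgebra.comul
        ((Coalgebra.comul (R := k) (A := H)) ∘ₗ HopfAlgebra.antipode (R := k)) =
      cunit k H := by
  have hmap : map (Coalgebra.comul (R := k) (A := H))
        ((Coalgebra.comul (R := k) (A := H)) ∘ₗ HopfAlgebra.antipode (R := k))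
      = map (Coalgebra.comul (R := k) (A := H)) (Coalgebra.comul (R := k) (A := H)) ∘ₗ
          (HopfAlgebra.antipode (R := k) (A := H)).lTensor H :=
    TensorProduct.ext' fun a b => by simp
  apply LinearMap.ext; intro x
  simp only [conv, comp_apply, hmap, cunit]
  rw [mul_comul_apply, HopfAlgebra.mul_antipode_lTensor_comul_apply]
  exact comul_linearMap_apply _

variable (k H)

/-- the "N" auxiliary map `u ⊗ v ↦ Σ S(u₂)v ⊗ S(u₁)`. -/
def Nmap : H ⊗[k] H →ₗ[k] H ⊗[k] H :=
  (TensorProduct.comm k H H).toLinearMap ∘ₗ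
    map (HopfAlgebra.antipode (R := k)) (gmap k H) ∘ₗ
    (TensorProduct.assoc k H H H).toLinearMap ∘ₗ
    (Coalgebra.comul (R := k) (A := H)).rTensor H

variable {k H}

lemma Nmap_comul (x : H) :
    Nmap k H (Coalgebra.comul x) = (1 : H) ⊗ₜ[k] HopfAlgebra.antipode (R := k) x := by
  have h1 : map (HopfAlgebra.antipode (R := k) (A := H)) (gmap k H) ∘ₗ
        (Coalgebra.comul (R := k) (A := H)).lTensor H
      = map (HopfAlgebra.antipode (R := k)) (gmap k H ∘ₗ Coalgebra.comul) :=
    TensorProduct.ext' fun a b => by simp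
  have h2 : map (HopfAlgebra.antipode (R := k) (A := H))
        (Algebra.linearMap k H ∘ₗ Coalgebra.counit)
      = map (HopfAlgebra.antipode (R := k)) (Algebra.linearMap k H) ∘ₗ
          (Coalgebra.counit (R := k) (A := H)).lTensor H :=
    TensorProduct.ext' fun a b => by simp
  simp only [Nmap, comp_apply, LinearEquiv.coe_coe]
  rw [Coalgebra.coassoc_apply, ← comp_apply
    (map (HopfAlgebra.antipode (R := k)) (gmap k H)), h1, g_comul, h2]
  simp only [comp_apply, Coalgebra.lTensor_counit_comul, map_tmul,
    Algebra.linearMap_apply, map_one, comm_tmul]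

variable (k H)

/-- the "D" auxiliary map `(x ⊗ y) ⊗ z ↦ ((S ⊗ S)(τ(Δ x))) * (y ⊗ z)`. -/
def Dmap : (H ⊗[k] H) ⊗[k] H →ₗ[k] H ⊗[k] H :=
  LinearMap.mul' k (H ⊗[k] H) ∘ₗ
    (ssw k H ∘ₗ (Coalgebra.comul (R := k) (A := H))).rTensor (H ⊗[k] H) ∘ₗ
    (TensorProduct.assoc k H H H).toLinearMap

variable {k H}

lemma Dmap_tmul (c : H ⊗[k] H) (z : H) :
    Dmap k H (c ⊗ₜ[k] z) = Nmap k H c * ((1 : H) ⊗ₜ[k] z) := by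
  induction c using TensorProduct.induction_on with
  | zero => simp [zero_tmul]
  | add u v hu hv => simp only [add_tmul, map_add, hu, hv, add_mul]
  | tmul u v =>
    simp only [Dmap, Nmap, comp_apply, LinearEquiv.coe_coe, assoc_tmul, rTensor_tmul,
      coe_comp, Function.comp_apply]
    generalize (Coalgebra.comul (R := k) u : H ⊗[k] H) = c'
    induction c' using TensorProduct.induction_on with
    | zero => simp only [map_zero, zero_tmul, zero_mul]
    | add s t hs ht =>
      simp only [map_add, add_tmul, add_mul, hs, ht]
    | tmul p r =>
      simp only [ssw_tmul, assoc_tmul, map_tmul, comm_tmul, gmap_tmul,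
        LinearMap.mul'_apply, Algebra.TensorProduct.tmul_mul_tmul, one_mul, mul_one]

lemma Dmap_rTensor_comul :
    Dmap k H ∘ₗ (Coalgebra.comul (R := k) (A := H)).rTensor H =
      TensorProduct.mk k H H 1 ∘ₗ gmap k H :=
  TensorProduct.ext' fun a b => by
    simp only [comp_apply, rTensor_tmul, Dmap_tmul, Nmap_comul, gmap_tmul, mk_apply,
      Algebra.TensorProduct.tmul_mul_tmul, one_mul]

lemma conv_qmap_comul :
    conv k H (ssw k H ∘ₗ Coalgebra.comul) Coalgebra.comul = cunit k H := by
  have h1 : map (ssw k H ∘ₗ (Coalgebra.comul (R := k) (A := H)))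
        (Coalgebra.comul (R := k) (A := H))
      = (ssw k H ∘ₗ (Coalgebra.comul (R := k) (A := H))).rTensor (H ⊗[k] H) ∘ₗ
          (Coalgebra.comul (R := k) (A := H)).lTensor H :=
    TensorProduct.ext' fun a b => by simp
  apply LinearMap.ext; intro x
  simp only [conv, comp_apply]
  rw [h1]
  simp only [comp_apply]
  rw [← Coalgebra.coassoc_apply]
  have hD : LinearMap.mul' k (H ⊗[k] H)
        ((ssw k H ∘ₗ (Coalgebra.comul (R := k) (A := H))).rTensor (H ⊗[k] H)
          ((TensorProduct.assoc k H H H)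
            ((Coalgebra.comul (R := k) (A := H)).rTensor H (Coalgebra.comul x))))
      = Dmap k H ((Coalgebra.comul (R := k) (A := H)).rTensor H (Coalgebra.comul x)) := rfl
  have h2 := LinearMap.congr_fun (Dmap_rTensor_comul (k := k) (H := H)) (Coalgebra.comul x)
  simp only [comp_apply] at h2
  rw [hD, h2]
  simp only [comp_apply, g_comul_apply, mk_apply, cunit, Algebra.linearMap_apply,
    Algebra.algebraMap_eq_smul_one, Algebra.TensorProduct.one_def, tmul_smul]

/-- antipode is an anti-coalgebra morphism: `(S ⊗ S) ∘ τ ∘ Δ = Δ ∘ S`. -/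
lemma ssw_comul_eq :
    ssw k H ∘ₗ (Coalgebra.comul (R := k) (A := H)) =
      Coalgebra.comul ∘ₗ HopfAlgebra.antipode (R := k) := by
  rw [← conv_cunit_right (ssw k H ∘ₗ Coalgebra.comul), ← conv_comul_antipodeComul,
    ← conv_assoc, conv_qmap_comul, conv_cunit_left]


variable (k H)

def Fmap : H ⊗[k] (H ⊗[k] H) →ₗ[k] H ⊗[k] H :=
  (gmap k H).rTensor H ∘ₗ (TensorProduct.assoc k H H H).symm.toLinearMap

def Tmap : H ⊗[k] (H ⊗[k] H) →ₗ[k] H ⊗[k] H :=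
  LinearMap.mul' k (H ⊗[k] H) ∘ₗ map (ssw k H) Coalgebra.comul ∘ₗ
    (TensorProduct.assoc k H H H).symm.toLinearMap

def vmap : H ⊗[k] H →ₗ[k] H :=
  (TensorProduct.lid k H).toLinearMap ∘ₗ (Coalgebra.counit (R := k) (A := H)).rTensor H

def psiMap : H ⊗[k] (H ⊗[k] H) →ₗ[k] H := vmap k H ∘ₗ (vmap k H).lTensor H

def Bmap : H ⊗[k] H →ₗ[k] H ⊗[k] H :=
  LinearMap.mul' k (H ⊗[k] H) ∘ₗ
    map ((TensorProduct.mk k H H).flip 1 ∘ₗ HopfAlgebra.antipode (R := k)) Coalgebra.comul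

variable {k H}

lemma vmap_tmul (a b : H) :
    vmap k H (a ⊗ₜ[k] b) = Coalgebra.counit (R := k) a • b := by
  simp [vmap]

lemma vmap_comul (x : H) : vmap k H (Coalgebra.comul x) = x := by
  simp only [vmap, comp_apply, LinearEquiv.coe_coe, Coalgebra.rTensor_counit_comul,
    lid_tmul, one_smul]

lemma psi_tmul (a : H) (c : H ⊗[k] H) :
    psiMap k H (a ⊗ₜ[k] c) = Coalgebra.counit (R := k) a • vmap k H c := by
  simp only [psiMap, comp_apply, lTensor_tmul, vmap_tmul]

lemma leg12_tmul (a b : H) : (leg12 k H) (a ⊗ₜ[k] b) = a ⊗ₜ[k] (b ⊗ₜ[k] (1 : H)) := by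
  simp [leg12]

lemma leg23_tmul (a b : H) : (leg23 k H) (a ⊗ₜ[k] b) = (1 : H) ⊗ₜ[k] (a ⊗ₜ[k] b) := by
  simp [leg23]

lemma idComul_tmul (a b : H) :
    (idComul k H) (a ⊗ₜ[k] b) = a ⊗ₜ[k] (Coalgebra.comul (R := k) b) := by
  simp [idComul]

lemma comulId_tmul (a b : H) :
    (comulId k H) (a ⊗ₜ[k] b) =
      (Algebra.TensorProduct.assoc k k k H H H) ((Coalgebra.comul (R := k) a) ⊗ₜ[k] b) := by
  simp [comulId]

lemma F_leg12 :
    Fmap k H ∘ₗ (leg12 k H).toLinearMap = (TensorProduct.mk k H H).flip 1 ∘ₗ gmap k H :=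
  TensorProduct.ext' fun a b => by
    simp only [comp_apply, AlgHom.toLinearMap_apply, leg12_tmul, Fmap,
      LinearEquiv.coe_coe, assoc_symm_tmul, rTensor_tmul, flip_apply, mk_apply]

lemma F_leg23 : Fmap k H ∘ₗ (leg23 k H).toLinearMap = LinearMap.id :=
  TensorProduct.ext' fun a b => by
    simp only [comp_apply, AlgHom.toLinearMap_apply, leg23_tmul, Fmap,
      LinearEquiv.coe_coe, assoc_symm_tmul, rTensor_tmul, gmap_tmul, antipode_one,
      one_mul, id_coe, id_eq]

lemma aux_F_assoc (c : H ⊗[k] H) (b : H) :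
    Fmap k H ((Algebra.TensorProduct.assoc k k k H H H) (c ⊗ₜ[k] b)) = (gmap k H c) ⊗ₜ[k] b := by
  induction c using TensorProduct.induction_on with
  | zero => simp only [zero_tmul, map_zero]
  | add s t hs ht => simp only [add_tmul, map_add, hs, ht]
  | tmul x y =>
    simp only [Algebra.TensorProduct.assoc_tmul, Fmap, comp_apply, LinearEquiv.coe_coe,
      assoc_symm_tmul, rTensor_tmul]

lemma F_comulId :
    Fmap k H ∘ₗ (comulId k H).toLinearMap = TensorProduct.mk k H H 1 ∘ₗ vmap k H :=
  TensorProduct.ext' fun a b => by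
    rw [comp_apply, comp_apply, AlgHom.toLinearMap_apply, comulId_tmul, aux_F_assoc,
      g_comul_apply, vmap_tmul, mk_apply, Algebra.linearMap_apply,
      Algebra.algebraMap_eq_smul_one, smul_tmul]

lemma aux_F_symm (a : H) (c : H ⊗[k] H) :
    (gmap k H).rTensor H ((TensorProduct.assoc k H H H).symm (a ⊗ₜ[k] c)) =
      ((HopfAlgebra.antipode (R := k) a) ⊗ₜ[k] (1 : H)) * c := by
  induction c using TensorProduct.induction_on with
  | zero => simp only [tmul_zero, map_zero, mul_zero]
  | add s t hs ht => simp only [tmul_add, map_add, hs, ht, mul_add]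
  | tmul y z =>
    simp only [assoc_symm_tmul, rTensor_tmul, gmap_tmul,
      Algebra.TensorProduct.tmul_mul_tmul, one_mul]

lemma T_leg23 :
    Tmap k H ∘ₗ (leg23 k H).toLinearMap = Fmap k H ∘ₗ (idComul k H).toLinearMap :=
  TensorProduct.ext' fun a b => by
    rw [comp_apply, comp_apply, AlgHom.toLinearMap_apply, AlgHom.toLinearMap_apply,
      leg23_tmul, idComul_tmul]
    simp only [Tmap, Fmap, comp_apply, LinearEquiv.coe_coe, assoc_symm_tmul, map_tmul]
    rw [aux_F_symm a (Coalgebra.comul b), ssw_tmul, antipode_one, LinearMap.mul'_apply]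

lemma T_leg12 : Tmap k H ∘ₗ (leg12 k H).toLinearMap = ssw k H :=
  TensorProduct.ext' fun a b => by
    simp only [comp_apply, AlgHom.toLinearMap_apply, leg12_tmul, Tmap,
      LinearEquiv.coe_coe, assoc_symm_tmul, map_tmul, Bialgebra.comul_one,
      LinearMap.mul'_apply, mul_one]

lemma aux_T_assoc (c : H ⊗[k] H) (b : H) :
    Tmap k H ((Algebra.TensorProduct.assoc k k k H H H) (c ⊗ₜ[k] b)) =
      (ssw k H c) * Coalgebra.comul (R := k) b := by
  induction c using TensorProduct.induction_on with
  | zero => simp only [zero_tmul, map_zero, zero_mul]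
  | add s t hs ht => simp only [add_tmul, map_add, hs, ht, add_mul]
  | tmul x y =>
    simp only [Algebra.TensorProduct.assoc_tmul, Tmap, comp_apply, LinearEquiv.coe_coe,
      assoc_symm_tmul, map_tmul, LinearMap.mul'_apply]

lemma T_comulId :
    Tmap k H ∘ₗ (comulId k H).toLinearMap = Coalgebra.comul ∘ₗ gmap k H :=
  TensorProduct.ext' fun a b => by
    rw [comp_apply, comp_apply, AlgHom.toLinearMap_apply, comulId_tmul, aux_T_assoc]
    have h := LinearMap.congr_fun (ssw_comul_eq (k := k) (H := H)) a
    simp only [comp_apply] at h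
    rw [h]
    simp only [comp_apply, gmap_tmul, ← Bialgebra.comul_mul]

lemma Bmap_tmul (y z : H) :
    Bmap k H (y ⊗ₜ[k] z) =
      ((HopfAlgebra.antipode (R := k) y) ⊗ₜ[k] (1 : H)) * Coalgebra.comul (R := k) z := by
  simp only [Bmap, comp_apply, map_tmul, coe_comp, Function.comp_apply, flip_apply,
    mk_apply, LinearMap.mul'_apply]

lemma claimE :
    LinearMap.mul' k (H ⊗[k] H) ∘ₗ
        ((TensorProduct.mk k H H).flip 1 ∘ₗ
          (HopfAlgebra.antipode (R := k) (A := H))).rTensor (H ⊗[k] H) ∘ₗ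
        (TensorProduct.assoc k H H H).toLinearMap =
      (gmap k H).rTensor H :=
  TensorProduct.ext_threefold fun x y z => by
    simp only [comp_apply, LinearEquiv.coe_coe, assoc_tmul, rTensor_tmul, coe_comp,
      Function.comp_apply, flip_apply, mk_apply, LinearMap.mul'_apply, gmap_tmul,
      Algebra.TensorProduct.tmul_mul_tmul, one_mul]

lemma Bmap_comul (x : H) :
    Bmap k H (Coalgebra.comul x) = (1 : H) ⊗ₜ[k] x := by
  have hmap : map ((TensorProduct.mk k H H).flip 1 ∘ₗ
        (HopfAlgebra.antipode (R := k) (A := H))) (Coalgebra.comul (R := k) (A := H))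
      = (((TensorProduct.mk k H H).flip 1 ∘ₗ
            (HopfAlgebra.antipode (R := k) (A := H))).rTensor (H ⊗[k] H)) ∘ₗ
          (Coalgebra.comul (R := k) (A := H)).lTensor H :=
    TensorProduct.ext' fun a b => by simp
  rw [Bmap, comp_apply, hmap, comp_apply, ← Coalgebra.coassoc_apply]
  have hE := LinearMap.congr_fun (claimE (k := k) (H := H))
    ((Coalgebra.comul (R := k) (A := H)).rTensor H (Coalgebra.comul x))
  simp only [comp_apply, LinearEquiv.coe_coe] at hE
  rw [hE, ← rTensor_comp_apply, g_comul, rTensor_comp_apply,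
    Coalgebra.rTensor_counit_comul, rTensor_tmul, Algebra.linearMap_apply, map_one]

lemma T_idComul :
    Tmap k H ∘ₗ (idComul k H).toLinearMap = TensorProduct.mk k H H 1 ∘ₗ gmap k H :=
  TensorProduct.ext' fun a b => by
    rw [comp_apply, comp_apply, AlgHom.toLinearMap_apply, idComul_tmul]
    have h7 : ∀ c : H ⊗[k] H, Tmap k H (a ⊗ₜ[k] c)
        = ((1 : H) ⊗ₜ[k] HopfAlgebra.antipode (R := k) a) * Bmap k H c := fun c => by
      induction c using TensorProduct.induction_on with
      | zero => simp only [tmul_zero, map_zero, mul_zero]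
      | add s t hs ht => simp only [tmul_add, map_add, hs, ht, mul_add]
      | tmul y z =>
        rw [Bmap_tmul, ← mul_assoc, Algebra.TensorProduct.tmul_mul_tmul, one_mul, mul_one]
        simp only [Tmap, comp_apply, LinearEquiv.coe_coe, assoc_symm_tmul, map_tmul,
          ssw_tmul, LinearMap.mul'_apply]
    rw [h7, Bmap_comul, Algebra.TensorProduct.tmul_mul_tmul, one_mul, gmap_tmul, mk_apply]

lemma psi_leg12 :
    psiMap k H ∘ₗ (leg12 k H).toLinearMap =
      Algebra.linearMap k H ∘ₗ (Coalgebra.counit (R := k)) ∘ₗ vmap k H :=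
  TensorProduct.ext' fun a b => by
    simp only [comp_apply, AlgHom.toLinearMap_apply, leg12_tmul, psi_tmul, vmap_tmul,
      map_smul, Algebra.linearMap_apply, Algebra.algebraMap_eq_smul_one, smul_smul,
      smul_eq_mul]

lemma psi_leg23 : psiMap k H ∘ₗ (leg23 k H).toLinearMap = vmap k H :=
  TensorProduct.ext' fun a b => by
    simp only [comp_apply, AlgHom.toLinearMap_apply, leg23_tmul, psi_tmul,
      Bialgebra.counit_one, one_smul]

lemma psi_idComul : psiMap k H ∘ₗ (idComul k H).toLinearMap = vmap k H :=
  TensorProduct.ext' fun a b => by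
    simp only [comp_apply, AlgHom.toLinearMap_apply, idComul_tmul, psi_tmul, vmap_comul,
      vmap_tmul]

lemma psi_comulId : psiMap k H ∘ₗ (comulId k H).toLinearMap = vmap k H :=
  TensorProduct.ext' fun a b => by
    rw [comp_apply, AlgHom.toLinearMap_apply, comulId_tmul]
    have aux8 : ∀ c : H ⊗[k] H,
        psiMap k H ((Algebra.TensorProduct.assoc k k k H H H) (c ⊗ₜ[k] b))
          = vmap k H ((vmap k H c) ⊗ₜ[k] b) := fun c => by
      induction c using TensorProduct.induction_on with
      | zero => simp only [zero_tmul, map_zero]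
      | add s t hs ht => simp only [add_tmul, map_add, hs, ht]
      | tmul x y =>
        simp only [Algebra.TensorProduct.assoc_tmul, psi_tmul, vmap_tmul, map_smul,
          smul_smul, smul_eq_mul]
    rw [aux8, vmap_comul]

lemma counit_vmap (w : H ⊗[k] H) :
    Coalgebra.counit (R := k) (vmap k H w) =
      Coalgebra.counit (R := k)
        ((TensorProduct.rid k H) ((Coalgebra.counit (R := k) (A := H)).lTensor H w)) := by
  induction w using TensorProduct.induction_on with
  | zero => simp
  | add s t hs ht => simp only [map_add, hs, ht]
  | tmul a b =>
    simp only [vmap_tmul, lTensor_tmul, rid_tmul, map_smul, smul_eq_mul, mul_comm]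

end Helpers

/-- if `χ ∈ H⊗H` is a Hochschild 2-cocycle of the coalgebra `H` with
`(Id⊗ε)(χ) = 0`, and `γ := m(S⊗Id)(χ)`, then `b¹(γ) = χ + τ(S⊗S)(χ)`; if moreover
`τ(S⊗S)(χ) = χ` and `char k ≠ 2` then `χ = b¹(γ/2)` is a 2-coboundary. -/
theorem two_cocycle_coboundary (χ : H ⊗[k] H)
    (hcocycle : leg12 k H χ + comulId k H χ = leg23 k H χ + idComul k H χ)
    (hcounit : LinearMap.lTensor H (Coalgebra.counit (R := k) (A := H)) χ = 0) :
    let S : H →ₗ[k] H := HopfAlgebra.antipode k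
    let γ : H := LinearMap.mul' k H (TensorProduct.map S LinearMap.id χ)
    ((1 : H) ⊗ₜ[k] γ - Coalgebra.comul (R := k) γ + γ ⊗ₜ[k] (1 : H)
        = χ + TensorProduct.comm k H H (TensorProduct.map S S χ)) ∧
      (TensorProduct.comm k H H (TensorProduct.map S S χ) = χ → (2 : k) ≠ 0 →
        χ = (1 : H) ⊗ₜ[k] ((2 : k)⁻¹ • γ) - Coalgebra.comul (R := k) ((2 : k)⁻¹ • γ)
          + ((2 : k)⁻¹ • γ) ⊗ₜ[k] (1 : H)) := by
  intro S γ
  have hγ : γ = gmap k H χ := rfl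
  -- ψ equation gives `(η ∘ ε)(v χ) = v χ`
  have epsi := congrArg (psiMap k H) hcocycle
  rw [map_add, map_add] at epsi
  have p12 := LinearMap.congr_fun (psi_leg12 (k := k) (H := H)) χ
  have p23 := LinearMap.congr_fun (psi_leg23 (k := k) (H := H)) χ
  have pic := LinearMap.congr_fun (psi_idComul (k := k) (H := H)) χ
  have pci := LinearMap.congr_fun (psi_comulId (k := k) (H := H)) χ
  simp only [comp_apply, AlgHom.toLinearMap_apply] at p12 p23 pic pci
  rw [p12, p23, pic, pci] at epsi
  have hve : Algebra.linearMap k H (Coalgebra.counit (R := k) (vmap k H χ)) = vmap k H χ :=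
    add_right_cancel epsi
  -- counit hypothesis gives `ε (v χ) = 0`, hence `v χ = 0`
  have hcv : Coalgebra.counit (R := k) (vmap k H χ) = 0 := by
    rw [counit_vmap, hcounit]
    simp
  have hv : vmap k H χ = 0 := by rw [← hve, hcv, map_zero]
  -- F applied to the cocycle identity
  have e1 := congrArg (Fmap k H) hcocycle
  rw [map_add, map_add] at e1
  have f12 := LinearMap.congr_fun (F_leg12 (k := k) (H := H)) χ
  have f23 := LinearMap.congr_fun (F_leg23 (k := k) (H := H)) χ
  simp only [comp_apply, AlgHom.toLinearMap_apply, flip_apply, mk_apply, id_coe, id_eq]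
    at f12 f23
  have fci := LinearMap.congr_fun (F_comulId (k := k) (H := H)) χ
  simp only [comp_apply, AlgHom.toLinearMap_apply, mk_apply] at fci
  rw [f12, f23, fci, hv, tmul_zero, add_zero] at e1
  -- e1 : gmap χ ⊗ 1 = χ + Fmap (idComul χ)
  -- T applied to the cocycle identity
  have e2 := congrArg (Tmap k H) hcocycle
  rw [map_add, map_add] at e2
  have t12 := LinearMap.congr_fun (T_leg12 (k := k) (H := H)) χ
  have t23 := LinearMap.congr_fun (T_leg23 (k := k) (H := H)) χ
  have tci := LinearMap.congr_fun (T_comulId (k := k) (H := H)) χ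
  have tic := LinearMap.congr_fun (T_idComul (k := k) (H := H)) χ
  simp only [comp_apply, AlgHom.toLinearMap_apply, mk_apply] at t12 t23 tci tic
  rw [t12, t23, tci, tic] at e2
  -- e2 : ssw χ + comul (gmap χ) = Fmap (idComul χ) + 1 ⊗ gmap χ
  have hssw : ssw k H χ = TensorProduct.comm k H H (TensorProduct.map S S χ) := by
    rw [ssw, comp_apply, LinearEquiv.coe_coe, map_comm]
  have hW : Fmap k H ((idComul k H) χ) = gmap k H χ ⊗ₜ[k] (1 : H) - χ := by
    rw [eq_sub_iff_add_eq, add_comm, ← e1]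
  rw [hW, hssw] at e2
  have key : (1 : H) ⊗ₜ[k] γ - Coalgebra.comul (R := k) γ + γ ⊗ₜ[k] (1 : H)
      = χ + TensorProduct.comm k H H (TensorProduct.map S S χ) := by
    rw [hγ]
    have hcg : Coalgebra.comul (R := k) (gmap k H χ)
        = gmap k H χ ⊗ₜ[k] (1 : H) - χ + (1 : H) ⊗ₜ[k] gmap k H χ
          - TensorProduct.comm k H H (TensorProduct.map S S χ) := by
      rw [eq_sub_iff_add_eq, add_comm _ (TensorProduct.comm k H H (TensorProduct.map S S χ)),
        ← e2]
    rw [hcg]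
    abel
  refine ⟨key, fun hsym h2 => ?_⟩
  have hrw : (1 : H) ⊗ₜ[k] ((2 : k)⁻¹ • γ) - Coalgebra.comul (R := k) ((2 : k)⁻¹ • γ)
      + ((2 : k)⁻¹ • γ) ⊗ₜ[k] (1 : H)
      = (2 : k)⁻¹ • ((1 : H) ⊗ₜ[k] γ - Coalgebra.comul (R := k) γ + γ ⊗ₜ[k] (1 : H)) := by
    rw [tmul_smul, map_smul, ← smul_tmul', smul_add, smul_sub]
  rw [hrw, key, hsym, ← two_smul k χ, smul_smul, inv_mul_cancel₀ h2, one_smul]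

end
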